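/- arXiv:1212.0674 — 2 statements merged into one kernel-verified Lean document; each statement's English description precedes it below -/
import Mathlib

section
/- Let Q be a nondegenerate diagonal integral quadratic form in an even number m of variables with p ∤ 2·det(Q) for an odd prime p, and k an integer with p ∤ k. Then δ_p(Q,k) = 1 - ((-1)^{m/2}·det(Q) | p)·p^{-m/2}. -/
open Filter Topology

open Finset


open Finset

lemma rc2 (p : ℕ) [Fact p.Prime] (hp2 : p ≠ 2) : ringChar (ZMod p) ≠ 2 := by
  rw [ZMod.ringChar_zmod_n]; exact hp2

lemma card_one_var (p : ℕ) [Fact p.Prime] (hp2 : p ≠ 2) (a u : ZMod p) (ha : a ≠ 0) :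
    (Fintype.card {x : ZMod p // a * x ^ 2 = u} : ℤ) = 1 + quadraticChar (ZMod p) (a * u) := by
  have e : {x : ZMod p // a * x ^ 2 = u} ≃ {z : ZMod p // z ^ 2 = a * u} := by
    refine ⟨fun x => ⟨a * x.1, ?_⟩, fun z => ⟨a⁻¹ * z.1, ?_⟩, fun x => ?_, fun z => ?_⟩
    · rw [mul_pow, sq a, mul_assoc, x.2]
    · rw [mul_pow, z.2]; field_simp
    · ext; field_simp
    · ext; field_simp
  rw [Fintype.card_congr e]
  have h := quadraticChar_card_sqrts (rc2 p hp2) (a * u)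
  have h2 : (Fintype.card {z : ZMod p // z ^ 2 = a * u} : ℤ) = ({z : ZMod p | z ^ 2 = a * u}.toFinset.card : ℤ) := by
    rw [Set.toFinset_card]; rfl
  rw [h2, h]; ring

lemma qc_inv_eq (p : ℕ) [Fact p.Prime] : (quadraticChar (ZMod p))⁻¹ = quadraticChar (ZMod p) := by
  refine MulChar.ext fun a => ?_
  have h : (a : ZMod p) ≠ 0 := a.ne_zero
  rw [MulChar.inv_apply']
  rcases quadraticChar_dichotomy (inv_ne_zero h) with h1 | h1 <;>
  rcases quadraticChar_dichotomy h with h2 | h2 <;>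
    rw [h1, h2] <;> first
    | rfl
    | (exfalso
       have := map_mul (quadraticChar (ZMod p)) (a:ZMod p)⁻¹ (a:ZMod p)
       rw [inv_mul_cancel₀ h, map_one, h1, h2] at this
       norm_num at this)

lemma sum_chi_mul (p : ℕ) [Fact p.Prime] (hp2 : p ≠ 2) (a : ZMod p) (ha : a ≠ 0) :
    ∑ u : ZMod p, quadraticChar (ZMod p) (a * u) = 0 := by
  simp_rw [map_mul]
  rw [← Finset.mul_sum, quadraticChar_sum_zero (rc2 p hp2), mul_zero]

lemma S1_ne (p : ℕ) [Fact p.Prime] (hp2 : p ≠ 2) (c : ZMod p) (hc : c ≠ 0) :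
    ∑ u : ZMod p, quadraticChar (ZMod p) u * quadraticChar (ZMod p) (c - u)
      = - quadraticChar (ZMod p) (-1) := by
  have key : ∑ u : ZMod p, quadraticChar (ZMod p) u * quadraticChar (ZMod p) (c - u)
      = ∑ t : ZMod p, quadraticChar (ZMod p) t * quadraticChar (ZMod p) (1 - t) := by
    rw [← Equiv.sum_comp (Equiv.mulLeft₀ c hc)]
    refine Finset.sum_congr rfl fun t _ => ?_
    simp only [Equiv.mulLeft₀_apply]
    rw [show c - c * t = c * (1 - t) by ring, map_mul, map_mul]
    have h2 := quadraticChar_sq_one (F := ZMod p) hc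
    ring_nf
    rw [h2]; ring
  rw [key]
  have := jacobiSum_nontrivial_inv (quadraticChar_ne_one (rc2 p hp2))
  rw [qc_inv_eq] at this
  rw [← this]; rfl

lemma sum_sq_chi (p : ℕ) [Fact p.Prime] : ∑ u : ZMod p, (quadraticChar (ZMod p) u)^2 = (p:ℤ) - 1 := by
  have h : ∀ u : ZMod p, (quadraticChar (ZMod p) u)^2 = 1 - (if u = 0 then 1 else 0) := by
    intro u
    rcases eq_or_ne u 0 with h | h
    · simp [h]
    · rw [quadraticChar_sq_one h, if_neg h]; ring
  simp_rw [h]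
  rw [Finset.sum_sub_distrib, Finset.sum_const, Finset.sum_ite_eq' Finset.univ (0 : ZMod p) (fun _ => (1:ℤ))]
  simp [ZMod.card]

lemma S1_zero (p : ℕ) [Fact p.Prime] :
    ∑ u : ZMod p, quadraticChar (ZMod p) u * quadraticChar (ZMod p) (0 - u)
      = ((p:ℤ) - 1) * quadraticChar (ZMod p) (-1) := by
  have h : ∀ u : ZMod p, quadraticChar (ZMod p) u * quadraticChar (ZMod p) (0 - u)
      = quadraticChar (ZMod p) (-1) * (quadraticChar (ZMod p) u)^2 := by
    intro u
    rw [show (0 : ZMod p) - u = -1 * u by ring, map_mul]; ring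
  simp_rw [h]
  rw [← Finset.mul_sum, sum_sq_chi]; ring

lemma vsum (p : ℕ) [Fact p.Prime] (c : ZMod p) :
    ∑ u : ZMod p, (if c - u = 0 then (p:ℤ) - 1 else -1) = 0 := by
  have h : ∀ u : ZMod p, (if c - u = 0 then (p:ℤ) - 1 else -1)
      = (p:ℤ) * (if u = c then 1 else 0) - 1 := by
    intro u
    rcases eq_or_ne u c with h | h
    · simp [h]
    · rw [if_neg h, if_neg (fun hh => h (by linear_combination -hh))]; ring
  simp_rw [h]
  rw [Finset.sum_sub_distrib, ← Finset.mul_sum,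
    Finset.sum_ite_eq' Finset.univ c (fun _ => (1:ℤ)), Finset.sum_const]
  simp [ZMod.card]

lemma S3 (p : ℕ) [Fact p.Prime] (hp2 : p ≠ 2) (a c : ZMod p) (ha : a ≠ 0) :
    ∑ u : ZMod p, quadraticChar (ZMod p) (a * u) * (if c - u = 0 then (p:ℤ) - 1 else -1)
      = (p:ℤ) * quadraticChar (ZMod p) (a * c) := by
  have h : ∀ u : ZMod p, quadraticChar (ZMod p) (a * u) * (if c - u = 0 then (p:ℤ) - 1 else -1)
      = (p:ℤ) * (if u = c then quadraticChar (ZMod p) (a * c) else 0) - quadraticChar (ZMod p) (a * u) := by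
    intro u
    rcases eq_or_ne u c with h | h
    · simp [h]; ring
    · rw [if_neg (fun hh => h (by linear_combination -hh)), if_neg h]; ring
  simp_rw [h]
  rw [Finset.sum_sub_distrib, ← Finset.mul_sum, Finset.sum_ite_eq' Finset.univ c
    (fun _ => quadraticChar (ZMod p) (a * c)), sum_chi_mul p hp2 a ha]
  simp

lemma card_split (p : ℕ) [Fact p.Prime] (m : ℕ) (a : Fin (m+1) → ZMod p) (c : ZMod p) :
    (Fintype.card {x : Fin (m+1) → ZMod p // ∑ i, a i * x i ^ 2 = c} : ℤ)
      = ∑ u : ZMod p, (Fintype.card {x0 : ZMod p // a 0 * x0 ^ 2 = u} : ℤ)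
          * (Fintype.card {xs : Fin m → ZMod p // ∑ i, a i.succ * xs i ^ 2 = c - u} : ℤ) := by
  classical
  have hsum : ∀ x : Fin (m+1) → ZMod p,
      ∑ i, a i * x i ^ 2 = a 0 * x 0 ^ 2 + ∑ i : Fin m, a i.succ * (Fin.tail x) i ^ 2 := by
    intro x; rw [Fin.sum_univ_succ]; rfl
  set sol := {x : Fin (m+1) → ZMod p // ∑ i, a i * x i ^ 2 = c}
  have h1 : Fintype.card sol = ∑ u : ZMod p,
      Fintype.card {x : sol // a 0 * (x.1 0) ^ 2 = u} := by
    rw [← Fintype.card_sigma]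
    exact Fintype.card_congr (Equiv.sigmaFiberEquiv (fun x : sol => a 0 * (x.1 0) ^ 2)).symm
  have h2 : ∀ u : ZMod p, Fintype.card {x : sol // a 0 * (x.1 0) ^ 2 = u}
      = Fintype.card ({x0 : ZMod p // a 0 * x0 ^ 2 = u}
          × {xs : Fin m → ZMod p // ∑ i, a i.succ * xs i ^ 2 = c - u}) := by
    intro u
    refine Fintype.card_congr ⟨fun x => ⟨⟨x.1.1 0, x.2⟩, ⟨Fin.tail x.1.1, ?_⟩⟩,
      fun y => ⟨⟨Fin.cons y.1.1 y.2.1, ?_⟩, ?_⟩, fun x => ?_, fun y => ?_⟩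
    · have := x.1.2
      rw [hsum] at this
      linear_combination this - x.2
    · rw [hsum, Fin.cons_zero, Fin.tail_cons, y.1.2, y.2.2]; ring
    · simp only [Fin.cons_zero]; exact y.1.2
    · exact Subtype.ext (Subtype.ext (Fin.cons_self_tail x.1.1))
    · refine Prod.ext (Subtype.ext ?_) (Subtype.ext ?_)
      · simp
      · simp [Fin.tail_cons]
  refine (congrArg (Nat.cast : ℕ → ℤ) (Fintype.card_congr' rfl : _ = Fintype.card sol)).trans ?_
  simp_rw [h1, h2, Fintype.card_prod]
  push_cast
  rfl

lemma S1 (p : ℕ) [Fact p.Prime] (hp2 : p ≠ 2) (c : ZMod p) :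
    ∑ u : ZMod p, quadraticChar (ZMod p) u * quadraticChar (ZMod p) (c - u)
      = quadraticChar (ZMod p) (-1) * (if c = 0 then (p:ℤ) - 1 else -1) := by
  rcases eq_or_ne c 0 with h | h
  · rw [if_pos h, h, S1_zero]; ring
  · rw [if_neg h, S1_ne p hp2 c h]; ring

lemma sum_chi_sub (p : ℕ) [Fact p.Prime] (hp2 : p ≠ 2) (d c : ZMod p) (hd : d ≠ 0) :
    ∑ u : ZMod p, quadraticChar (ZMod p) (d * (c - u)) = 0 := by
  rw [← Equiv.sum_comp (Equiv.subLeft c)]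
  simp only [Equiv.subLeft_apply]
  calc ∑ u : ZMod p, quadraticChar (ZMod p) (d * (c - (c - u)))
      = ∑ u : ZMod p, quadraticChar (ZMod p) (d * u) := by
        refine Finset.sum_congr rfl fun u _ => ?_; ring_nf
    _ = 0 := sum_chi_mul p hp2 d hd

lemma conv_odd (p : ℕ) [Fact p.Prime] (hp2 : p ≠ 2) (a0 d : ZMod p) (ha0 : a0 ≠ 0)
    (hd : d ≠ 0) (P Q : ℤ) (c : ZMod p) :
    ∑ u : ZMod p, (1 + quadraticChar (ZMod p) (a0 * u))
        * (P + quadraticChar (ZMod p) (d * (c - u)) * Q)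
      = (p:ℤ) * P + quadraticChar (ZMod p) a0 * quadraticChar (ZMod p) d
          * quadraticChar (ZMod p) (-1) * (if c = 0 then (p:ℤ) - 1 else -1) * Q := by
  have key : ∀ u : ZMod p, (1 + quadraticChar (ZMod p) (a0 * u))
        * (P + quadraticChar (ZMod p) (d * (c - u)) * Q)
      = P + quadraticChar (ZMod p) (d * (c - u)) * Q + quadraticChar (ZMod p) (a0 * u) * P
        + (quadraticChar (ZMod p) a0 * quadraticChar (ZMod p) d * Q)
          * (quadraticChar (ZMod p) u * quadraticChar (ZMod p) (c - u)) := by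
    intro u
    rw [map_mul, map_mul]
    ring
  simp_rw [key]
  rw [Finset.sum_add_distrib, Finset.sum_add_distrib, Finset.sum_add_distrib,
    Finset.sum_const, ← Finset.sum_mul, ← Finset.sum_mul, sum_chi_sub p hp2 d c hd,
    sum_chi_mul p hp2 a0 ha0, ← Finset.mul_sum, S1 p hp2 c]
  simp [ZMod.card]
  ring

lemma conv_even (p : ℕ) [Fact p.Prime] (hp2 : p ≠ 2) (a0 : ZMod p) (ha0 : a0 ≠ 0)
    (P Q : ℤ) (c : ZMod p) :
    ∑ u : ZMod p, (1 + quadraticChar (ZMod p) (a0 * u))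
        * (P + (if c - u = 0 then (p:ℤ) - 1 else -1) * Q)
      = (p:ℤ) * P + (p:ℤ) * quadraticChar (ZMod p) (a0 * c) * Q := by
  have key : ∀ u : ZMod p, (1 + quadraticChar (ZMod p) (a0 * u))
        * (P + (if c - u = 0 then (p:ℤ) - 1 else -1) * Q)
      = P + (if c - u = 0 then (p:ℤ) - 1 else -1) * Q + quadraticChar (ZMod p) (a0 * u) * P
        + (quadraticChar (ZMod p) (a0 * u) * (if c - u = 0 then (p:ℤ) - 1 else -1)) * Q := by
    intro u; ring
  simp_rw [key]
  rw [Finset.sum_add_distrib, Finset.sum_add_distrib, Finset.sum_add_distrib,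
    Finset.sum_const, ← Finset.sum_mul, vsum, ← Finset.sum_mul, sum_chi_mul p hp2 a0 ha0,
    ← Finset.sum_mul, S3 p hp2 a0 c ha0]
  simp [ZMod.card]

lemma countA (p : ℕ) [Fact p.Prime] (hp2 : p ≠ 2) :
    ∀ m : ℕ, 0 < m → ∀ a : Fin m → ZMod p, (∀ i, a i ≠ 0) → ∀ c : ZMod p,
    (Fintype.card {x : Fin m → ZMod p // ∑ i, a i * x i ^ 2 = c} : ℤ)
      = (p:ℤ) ^ (m - 1) +
        (if Even m then
          quadraticChar (ZMod p) ((-1) ^ (m / 2) * ∏ i, a i)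
            * (if c = 0 then (p:ℤ) - 1 else -1) * (p:ℤ) ^ (m / 2 - 1)
        else
          quadraticChar (ZMod p) ((-1) ^ (m / 2) * (∏ i, a i) * c) * (p:ℤ) ^ (m / 2)) := by
  intro m
  induction m with
  | zero => omega
  | succ n ih =>
    intro _ a ha c
    rcases Nat.eq_zero_or_pos n with hn | hn
    · subst hn
      have e : {x : Fin 1 → ZMod p // ∑ i, a i * x i ^ 2 = c}
          ≃ {x : ZMod p // a 0 * x ^ 2 = c} := by
        refine ⟨fun x => ⟨x.1 0, ?_⟩, fun x => ⟨fun _ => x.1, ?_⟩, fun x => ?_, fun x => ?_⟩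
        · have := x.2; rwa [Fin.sum_univ_one] at this
        · rw [Fin.sum_univ_one]; exact x.2
        · ext i; rw [Subsingleton.elim i 0]
        · rfl
      rw [Fintype.card_congr e, card_one_var p hp2 (a 0) c (ha 0)]
      norm_num
      rw [Fin.prod_univ_one]
    · -- inductive step, n ≥ 1
      rw [card_split p n a c]
      set A : Fin n → ZMod p := fun i => a i.succ with hAdef
      have hA : ∀ i, A i ≠ 0 := fun i => ha i.succ
      have hprod : ∏ i : Fin (n+1), a i = a 0 * ∏ i : Fin n, A i := Fin.prod_univ_succ a
      have hApne : (∏ i : Fin n, A i) ≠ 0 := Finset.prod_ne_zero_iff.mpr fun i _ => hA i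
      have hppow : (p:ℤ) * (p:ℤ) ^ (n - 1) = (p:ℤ) ^ n := by
        rw [← pow_succ']
        congr 1
        omega
      by_cases hpar : Even n
      · -- n even, n+1 odd
        have hhalf : (n + 1) / 2 = n / 2 := by
          obtain ⟨t, rfl⟩ := hpar; omega
        have hn2 : 1 ≤ n / 2 := by
          obtain ⟨t, ht⟩ := hpar; omega
        have key : ∀ u : ZMod p,
            (Fintype.card {x0 : ZMod p // a 0 * x0 ^ 2 = u} : ℤ)
              * (Fintype.card {xs : Fin n → ZMod p // ∑ i, A i * xs i ^ 2 = c - u} : ℤ)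
            = (1 + quadraticChar (ZMod p) (a 0 * u)) * ((p:ℤ) ^ (n-1)
                + (if c - u = 0 then (p:ℤ) - 1 else -1)
                  * (quadraticChar (ZMod p) ((-1) ^ (n / 2) * ∏ i, A i) * (p:ℤ) ^ (n / 2 - 1))) := by
          intro u
          rw [card_one_var p hp2 (a 0) u (ha 0), ih hn A hA (c - u), if_pos hpar]
          ring
        rw [Finset.sum_congr rfl fun u _ => key u,
          conv_even p hp2 (a 0) (ha 0) ((p:ℤ) ^ (n-1))
            (quadraticChar (ZMod p) ((-1) ^ (n / 2) * ∏ i, A i) * (p:ℤ) ^ (n / 2 - 1)) c,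
          if_neg (fun h => (Nat.even_add_one.mp h) hpar)]
        have hchi : quadraticChar (ZMod p) (a 0 * c)
              * quadraticChar (ZMod p) ((-1) ^ (n / 2) * ∏ i, A i)
            = quadraticChar (ZMod p) ((-1) ^ ((n+1) / 2) * (∏ i : Fin (n+1), a i) * c) := by
          rw [← map_mul]
          congr 1
          rw [hprod, hhalf]
          ring
        have hp2' : (p:ℤ) * (p:ℤ) ^ (n / 2 - 1) = (p:ℤ) ^ ((n+1) / 2) := by
          rw [← pow_succ', hhalf]
          congr 1
          omega
        rw [show n + 1 - 1 = n from rfl]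
        linear_combination hppow + quadraticChar (ZMod p) ((-1) ^ ((n+1) / 2) * (∏ i : Fin (n+1), a i) * c) * hp2'
          + (p:ℤ) * (p:ℤ) ^ (n / 2 - 1) * hchi
      · -- n odd, n+1 even
        have hodd : Odd n := Nat.odd_iff.mpr (Nat.not_even_iff.mp hpar)
        have hhalf : (n + 1) / 2 = n / 2 + 1 := by
          obtain ⟨t, rfl⟩ := hodd; omega
        have hd : ((-1 : ZMod p) ^ (n / 2) * ∏ i, A i) ≠ 0 :=
          mul_ne_zero (pow_ne_zero _ (by
            intro h
            have := (neg_eq_zero.mp h : (1 : ZMod p) = 0)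
            exact one_ne_zero this)) hApne
        have key : ∀ u : ZMod p,
            (Fintype.card {x0 : ZMod p // a 0 * x0 ^ 2 = u} : ℤ)
              * (Fintype.card {xs : Fin n → ZMod p // ∑ i, A i * xs i ^ 2 = c - u} : ℤ)
            = (1 + quadraticChar (ZMod p) (a 0 * u)) * ((p:ℤ) ^ (n-1)
                + quadraticChar (ZMod p) (((-1) ^ (n / 2) * ∏ i, A i) * (c - u)) * (p:ℤ) ^ (n / 2)) := by
          intro u
          rw [card_one_var p hp2 (a 0) u (ha 0), ih hn A hA (c - u), if_neg hpar]
        rw [Finset.sum_congr rfl fun u _ => key u,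
          conv_odd p hp2 (a 0) ((-1) ^ (n / 2) * ∏ i, A i) (ha 0) hd
            ((p:ℤ) ^ (n-1)) ((p:ℤ) ^ (n / 2)) c,
          if_pos (Nat.even_add_one.mpr hpar)]
        have hchi : quadraticChar (ZMod p) (a 0)
              * quadraticChar (ZMod p) ((-1) ^ (n / 2) * ∏ i, A i)
              * quadraticChar (ZMod p) (-1)
            = quadraticChar (ZMod p) ((-1) ^ ((n+1) / 2) * ∏ i : Fin (n+1), a i) := by
          rw [← map_mul, ← map_mul]
          congr 1
          rw [hprod, hhalf]
          ring
        have hexp : (n + 1) / 2 - 1 = n / 2 := by omega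
        rw [show n + 1 - 1 = n from rfl, hexp]
        linear_combination hppow + (if c = 0 then (p:ℤ) - 1 else -1) * (p:ℤ) ^ (n / 2) * hchi

section Linear

variable (p : ℕ) [Fact p.Prime]

/-- The number of solutions of a nontrivial linear equation over `ZMod p`. -/
lemma card_linear (m : ℕ) (b : Fin m → ZMod p) (i0 : Fin m) (hb : b i0 ≠ 0) (d : ZMod p) :
    Fintype.card {t : Fin m → ZMod p // ∑ i, b i * t i = d} = p ^ (m - 1) := by
  classical
  set L : (Fin m → ZMod p) →+ ZMod p :=
    { toFun := fun t => ∑ i, b i * t i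
      map_zero' := by simp
      map_add' := by intro t s; simp [mul_add, Finset.sum_add_distrib] }
  have hLsurj : ∀ v : ZMod p, L (fun i => if i = i0 then (b i0)⁻¹ * v else 0) = v := by
    intro v
    show ∑ i, b i * (if i = i0 then (b i0)⁻¹ * v else 0) = v
    rw [Finset.sum_eq_single i0]
    · rw [if_pos rfl, ← mul_assoc, mul_inv_cancel₀ hb, one_mul]
    · intro i _ hi; rw [if_neg hi, mul_zero]
    · intro h; exact absurd (Finset.mem_univ i0) h
  have hfib : ∀ d' : ZMod p, Fintype.card {t : Fin m → ZMod p // L t = d'}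
      = Fintype.card {t : Fin m → ZMod p // L t = 0} := by
    intro d'
    set t0 : Fin m → ZMod p := fun i => if i = i0 then (b i0)⁻¹ * d' else 0
    have ht0 : L t0 = d' := hLsurj d'
    exact Fintype.card_congr
      ⟨fun x => ⟨x.1 - t0, by rw [map_sub, x.2, ht0, sub_self]⟩,
       fun y => ⟨y.1 + t0, by rw [map_add, y.2, ht0, zero_add]⟩,
       fun x => by ext1; simp, fun y => by ext1; simp⟩
  have htot : ∑ d' : ZMod p, Fintype.card {t : Fin m → ZMod p // L t = d'}
      = Fintype.card (Fin m → ZMod p) := by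
    rw [← Fintype.card_sigma]
    exact Fintype.card_congr (Equiv.sigmaFiberEquiv (fun t : Fin m → ZMod p => L t))
  rw [Fintype.card_fun, ZMod.card, Fintype.card_fin] at htot
  have htot2 : p * Fintype.card {t : Fin m → ZMod p // L t = 0} = p ^ m := by
    rw [← htot]
    rw [Finset.sum_congr rfl fun d' _ => hfib d', Finset.sum_const, Finset.card_univ, ZMod.card,
      smul_eq_mul]
  have hm1 : 0 < m := i0.pos
  have : p * Fintype.card {t : Fin m → ZMod p // L t = 0} = p * p ^ (m - 1) := by
    rw [htot2, ← pow_succ']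
    congr 1
    omega
  have hcard0 := Nat.eq_of_mul_eq_mul_left (Fact.out : p.Prime).pos this
  have hfinal : Fintype.card {t : Fin m → ZMod p // L t = d} = p ^ (m - 1) := by
    rw [hfib d, hcard0]
  exact hfinal

end Linear

section Lift

variable (p : ℕ) [Fact p.Prime] (j : ℕ)

noncomputable def psi (t : ZMod p) : ZMod (p ^ (j + 1)) :=
  (p : ZMod (p ^ (j + 1))) ^ j * (t.val : ZMod (p ^ (j + 1)))

lemma p_pow_succ_zero : (p : ZMod (p ^ (j + 1))) ^ (j + 1) = 0 := by
  have : ((p ^ (j + 1) : ℕ) : ZMod (p ^ (j + 1))) = 0 := ZMod.natCast_self _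
  push_cast at this
  exact this

lemma psi_mul_psi (hj : 1 ≤ j) (t s : ZMod p) : psi p j t * psi p j s = 0 := by
  unfold psi
  · have : (p : ZMod (p ^ (j + 1))) ^ j * (p : ZMod (p ^ (j + 1))) ^ j
        = (p : ZMod (p ^ (j + 1))) ^ (j + 1) * (p : ZMod (p ^ (j + 1))) ^ (j - 1) := by
      rw [← pow_add, ← pow_add]
      congr 1
      omega
    calc (p : ZMod (p ^ (j + 1))) ^ j * (t.val : ZMod (p ^ (j + 1)))
          * ((p : ZMod (p ^ (j + 1))) ^ j * (s.val : ZMod (p ^ (j + 1))))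
        = (p : ZMod (p ^ (j + 1))) ^ j * (p : ZMod (p ^ (j + 1))) ^ j
            * ((t.val : ZMod (p ^ (j + 1))) * (s.val : ZMod (p ^ (j + 1)))) := by ring
      _ = 0 := by rw [this, p_pow_succ_zero]; ring

lemma psi_eq_iff (t s : ZMod p) : psi p j t = psi p j s ↔ t = s := by
  constructor
  · intro h
    unfold psi at h
    have hcast : ((p ^ j * t.val : ℕ) : ZMod (p ^ (j + 1))) = ((p ^ j * s.val : ℕ) : ZMod (p ^ (j + 1))) := by
      push_cast
      exact h
    rw [ZMod.natCast_eq_natCast_iff] at hcast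
    have hmod : t.val ≡ s.val [MOD p] := by
      have h2 := hcast
      rw [show p ^ (j+1) = p ^ j * p by ring] at h2
      exact Nat.ModEq.mul_left_cancel' (pow_ne_zero _ (Fact.out : p.Prime).ne_zero) h2
    have : (t.val : ZMod p) = (s.val : ZMod p) := (ZMod.natCast_eq_natCast_iff _ _ _).mpr hmod
    rwa [ZMod.natCast_val, ZMod.natCast_val, ZMod.cast_id, ZMod.cast_id] at this
  · intro h; rw [h]

lemma pj_mul_eq_psi (z : ZMod (p ^ (j + 1))) :
    (p : ZMod (p ^ (j + 1))) ^ j * z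
      = psi p j ((z.val : ZMod p)) := by
  unfold psi
  have hz : ((z.val : ℕ) : ZMod (p ^ (j + 1))) = z := by
    rw [ZMod.natCast_val, ZMod.cast_id]
  have hval : ((z.val : ZMod p)).val = z.val % p := ZMod.val_natCast _ _
  rw [hval]
  conv_lhs => rw [← hz]
  have hdecomp : z.val = p * (z.val / p) + z.val % p := (Nat.div_add_mod z.val p).symm
  calc (p : ZMod (p ^ (j + 1))) ^ j * ((z.val : ℕ) : ZMod (p ^ (j + 1)))
      = (p : ZMod (p ^ (j + 1))) ^ j * (((p * (z.val / p) + z.val % p : ℕ)) : ZMod (p ^ (j + 1))) := by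
        rw [← hdecomp]
    _ = (p : ZMod (p ^ (j + 1))) ^ (j + 1) * ((z.val / p : ℕ) : ZMod (p ^ (j + 1)))
        + (p : ZMod (p ^ (j + 1))) ^ j * ((z.val % p : ℕ) : ZMod (p ^ (j + 1))) := by
        push_cast
        ring
    _ = (p : ZMod (p ^ (j + 1))) ^ j * ((z.val % p : ℕ) : ZMod (p ^ (j + 1))) := by
        rw [p_pow_succ_zero]; ring

end Lift

section LiftMain

variable (p : ℕ) [Fact p.Prime]

lemma psi_zero (j : ℕ) : psi p j 0 = 0 := by
  unfold psi
  simp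

lemma pi_psi (j : ℕ) (t : ZMod p) :
    ZMod.castHom (pow_dvd_pow p (Nat.le_succ j)) (ZMod (p^j)) (psi p j t) = 0 := by
  unfold psi
  rw [map_mul, map_pow, map_natCast]
  have : ((p : ZMod (p^j)))^j = 0 := by
    have h := ZMod.natCast_self (p^j)
    push_cast at h
    rw [h]
  rw [this, zero_mul]

lemma ker_pi_exists (j : ℕ) (z : ZMod (p^(j+1)))
    (hz : ZMod.castHom (pow_dvd_pow p (Nat.le_succ j)) (ZMod (p^j)) z = 0) :
    ∃ w : ZMod (p^(j+1)), z = (p : ZMod (p^(j+1)))^j * w := by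
  have hval : ((z.val : ℕ) : ZMod (p^j)) = 0 := by
    rw [ZMod.natCast_val]
    rw [ZMod.castHom_apply] at hz
    exact hz
  have hdvd : p^j ∣ z.val := (ZMod.natCast_eq_zero_iff _ _).mp hval
  obtain ⟨w, hw⟩ := hdvd
  refine ⟨(w : ZMod (p^(j+1))), ?_⟩
  have : ((z.val : ℕ) : ZMod (p^(j+1))) = z := by rw [ZMod.natCast_val, ZMod.cast_id]
  rw [← this, hw]
  push_cast
  ring

lemma lift_card (hp2 : p ≠ 2) (m : ℕ) (a : Fin m → ℤ)
    (hai : ∀ i, ¬ (p:ℤ) ∣ a i) (k : ℤ) (hk : ¬ (p:ℤ) ∣ k) (j : ℕ) (hj : 1 ≤ j) :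
    Fintype.card {x : Fin m → ZMod (p^(j+1)) //
        ∑ i, (a i : ZMod (p^(j+1))) * x i ^ 2 = (k : ZMod (p^(j+1)))}
      = p ^ (m - 1) * Fintype.card {y : Fin m → ZMod (p^j) //
          ∑ i, (a i : ZMod (p^j)) * y i ^ 2 = (k : ZMod (p^j))} := by
  classical
  set π := ZMod.castHom (pow_dvd_pow p (Nat.le_succ j)) (ZMod (p^j)) with hπdef
  set ρ := ZMod.castHom (dvd_pow_self p (Nat.succ_ne_zero j)) (ZMod p) with hρdef
  set solR := {x : Fin m → ZMod (p^(j+1)) //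
      ∑ i, (a i : ZMod (p^(j+1))) * x i ^ 2 = (k : ZMod (p^(j+1)))} with hsolR
  set solS := {y : Fin m → ZMod (p^j) //
      ∑ i, (a i : ZMod (p^j)) * y i ^ 2 = (k : ZMod (p^j))} with hsolS
  have hΦpf : ∀ x : solR, ∑ i, (a i : ZMod (p^j)) * (π (x.1 i)) ^ 2 = (k : ZMod (p^j)) := by
    intro x
    have := congrArg π x.2
    rw [map_sum, map_intCast] at this
    rw [← this]
    refine Finset.sum_congr rfl fun i _ => ?_
    rw [map_mul, map_pow, map_intCast]
  set Φ : solR → solS := fun x => ⟨fun i => π (x.1 i), hΦpf x⟩ with hΦdef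
  have hcard : Fintype.card solR = ∑ y : solS, Fintype.card {x : solR // Φ x = y} := by
    rw [← Fintype.card_sigma]
    exact Fintype.card_congr (Equiv.sigmaFiberEquiv Φ).symm
  have hfib : ∀ y : solS, Fintype.card {x : solR // Φ x = y} = p ^ (m - 1) := by
    intro y
    -- canonical lift
    set x0 : Fin m → ZMod (p^(j+1)) := fun i => ((y.1 i).val : ZMod (p^(j+1))) with hx0def
    have hπx0 : ∀ i, π (x0 i) = y.1 i := by
      intro i
      rw [hx0def]
      simp only [map_natCast]
      rw [ZMod.natCast_val, ZMod.cast_id]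
    set E : ZMod (p^(j+1)) := ∑ i, (a i : ZMod (p^(j+1))) * x0 i ^ 2 - k with hEdef
    have hπE : π E = 0 := by
      rw [hEdef, map_sub, map_sum, map_intCast]
      have : ∑ i, π ((a i : ZMod (p^(j+1))) * x0 i ^ 2)
          = ∑ i, (a i : ZMod (p^j)) * (y.1 i) ^ 2 := by
        refine Finset.sum_congr rfl fun i _ => ?_
        rw [map_mul, map_pow, map_intCast, hπx0]
      rw [this, y.2, sub_self]
    obtain ⟨E', hE'⟩ := ker_pi_exists p j E hπE
    set b : Fin m → ZMod p := fun i => 2 * (a i : ZMod p) * ρ (x0 i) with hbdef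
    set d : ZMod p := - ((E'.val : ZMod p)) with hddef
    -- the key condition equivalence
    have hψval : ∀ t : ZMod p, psi p j t = (p : ZMod (p^(j+1)))^j * ((t.val : ℕ) : ZMod (p^(j+1))) := by
      intro t; rfl
    have cond_key : ∀ t : Fin m → ZMod p,
        (∑ i, (a i : ZMod (p^(j+1))) * (x0 i + psi p j (t i)) ^ 2 = (k : ZMod (p^(j+1))))
          ↔ ∑ i, b i * t i = d := by
      intro t
      set L : ZMod (p^(j+1)) := ∑ i, 2 * (a i : ZMod (p^(j+1))) * x0 i * (((t i).val : ℕ) : ZMod (p^(j+1))) with hLdef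
      have hexp : ∑ i, (a i : ZMod (p^(j+1))) * (x0 i + psi p j (t i)) ^ 2
          = (k : ZMod (p^(j+1))) + ((p : ZMod (p^(j+1)))^j * (E' + L)) := by
        have hterm : ∀ i, (a i : ZMod (p^(j+1))) * (x0 i + psi p j (t i)) ^ 2
            = (a i : ZMod (p^(j+1))) * x0 i ^ 2
              + (p : ZMod (p^(j+1)))^j * (2 * (a i : ZMod (p^(j+1))) * x0 i * (((t i).val : ℕ) : ZMod (p^(j+1)))) := by
          intro i
          have hψ2 : psi p j (t i) * psi p j (t i) = 0 := psi_mul_psi p j hj _ _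
          rw [hψval]
          ring_nf
          rw [hψval] at hψ2
          ring_nf at hψ2
          linear_combination (a i : ZMod (p^(j+1))) * hψ2
        rw [Finset.sum_congr rfl fun i _ => hterm i, Finset.sum_add_distrib, ← Finset.mul_sum,
          ← hLdef]
        have : ∑ i, (a i : ZMod (p^(j+1))) * x0 i ^ 2 = (k : ZMod (p^(j+1))) + E := by
          rw [hEdef]; ring
        rw [this, hE']
        ring
      rw [hexp]
      have h0 : ((k : ZMod (p^(j+1))) + (p : ZMod (p^(j+1)))^j * (E' + L) = (k : ZMod (p^(j+1))))
          ↔ (p : ZMod (p^(j+1)))^j * (E' + L) = 0 := by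
        constructor
        · intro h; linear_combination h
        · intro h; linear_combination h
      rw [h0, pj_mul_eq_psi, ← psi_zero p j, psi_eq_iff]
      have hval : (((E' + L).val : ℕ) : ZMod p) = ((E'.val : ℕ) : ZMod p) + ∑ i, b i * t i := by
        have h1 : (((E' + L).val : ℕ) : ZMod p) = ρ (E' + L) := by
          rw [ZMod.natCast_val, ZMod.castHom_apply]
        have h2 : ((E'.val : ℕ) : ZMod p) = ρ E' := by
          rw [ZMod.natCast_val, ZMod.castHom_apply]
        rw [h1, h2, map_add]
        congr 1
        rw [hLdef, map_sum]
        refine Finset.sum_congr rfl fun i _ => ?_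
        have hρt : ρ ((((t i).val : ℕ)) : ZMod (p^(j+1))) = t i := by
          rw [map_natCast, ZMod.natCast_val, ZMod.cast_id]
        rw [map_mul, map_mul, map_mul, map_intCast, map_ofNat, hρt, hbdef]
      constructor
      · intro h
        rw [hval] at h
        rw [hddef]
        linear_combination h
      · intro h
        rw [hval, h, hddef]
        ring
    -- b is not identically zero
    have hbne : ∃ i0, b i0 ≠ 0 := by
      by_contra hall
      push_neg at hall
      have h2ne : (2 : ZMod p) ≠ 0 := by
        have : ((2:ℕ) : ZMod p) ≠ 0 := by
          rw [Ne, ZMod.natCast_eq_zero_iff]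
          intro hdvd
          exact hp2 ((Nat.prime_dvd_prime_iff_eq (Fact.out : p.Prime) Nat.prime_two).mp hdvd)
        simpa using this
      have haine : ∀ i, (a i : ZMod p) ≠ 0 := by
        intro i h
        exact hai i ((ZMod.intCast_zmod_eq_zero_iff_dvd _ _).mp h)
      have hρx0 : ∀ i, ρ (x0 i) = 0 := by
        intro i
        have := hall i
        rw [hbdef] at this
        rcases mul_eq_zero.mp this with h | h
        · rcases mul_eq_zero.mp h with h' | h'
          · exact absurd h' h2ne
          · exact absurd h' (haine i)
        · exact h
      -- then k ≡ 0 mod p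
      have : (k : ZMod p) = 0 := by
        have hsum := congrArg ρ (show ∑ i, (a i : ZMod (p^(j+1))) * x0 i ^ 2 = (k : ZMod (p^(j+1))) + E by rw [hEdef]; ring)
        rw [map_sum, map_add, map_intCast] at hsum
        have hterm : ∀ i, ρ ((a i : ZMod (p^(j+1))) * x0 i ^ 2) = 0 := by
          intro i
          rw [map_mul, map_pow, hρx0 i]
          ring
        rw [Finset.sum_congr rfl fun i _ => hterm i, Finset.sum_const_zero] at hsum
        have hρE : ρ E = 0 := by
          rw [hE', map_mul, map_pow, map_natCast]
          have : (p : ZMod p) = 0 := by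
            simpa using ZMod.natCast_self p
          rw [this, zero_pow (by omega : j ≠ 0), zero_mul]
        rw [hρE, add_zero] at hsum
        exact hsum.symm
      exact hk ((ZMod.intCast_zmod_eq_zero_iff_dvd _ _).mp this)
    obtain ⟨i0, hbi0⟩ := hbne
    -- fiber ≃ solutions of linear equation
    have hfibequiv : Fintype.card {x : solR // Φ x = y}
        = Fintype.card {t : Fin m → ZMod p // ∑ i, b i * t i = d} := by
      have hG : ∀ t : {t : Fin m → ZMod p // ∑ i, b i * t i = d},
          ∑ i, (a i : ZMod (p^(j+1))) * (x0 i + psi p j (t.1 i)) ^ 2 = (k : ZMod (p^(j+1))) :=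
        fun t => (cond_key t.1).mpr t.2
      have hGfib : ∀ t : {t : Fin m → ZMod p // ∑ i, b i * t i = d},
          Φ (⟨fun i => x0 i + psi p j (t.1 i), hG t⟩ : solR) = y := by
        intro t
        refine Subtype.ext (funext fun i => ?_)
        show π (x0 i + psi p j (t.1 i)) = y.1 i
        rw [map_add, hπx0, pi_psi, add_zero]
      set G : {t : Fin m → ZMod p // ∑ i, b i * t i = d} → {x : solR // Φ x = y} :=
        fun t => ⟨⟨fun i => x0 i + psi p j (t.1 i), hG t⟩, hGfib t⟩ with hGdef
      have hGinj : Function.Injective G := by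
        intro t s h
        have h2 := congrArg (fun z => z.1.1) h
        refine Subtype.ext (funext fun i => ?_)
        have h3 := congrFun h2 i
        have : psi p j (t.1 i) = psi p j (s.1 i) := by
          have := add_left_cancel h3
          exact this
        exact (psi_eq_iff p j _ _).mp this
      have hGsurj : Function.Surjective G := by
        intro x
        have hxi : ∀ i, π (x.1.1 i - x0 i) = 0 := by
          intro i
          rw [map_sub, hπx0]
          have : π (x.1.1 i) = y.1 i := congrFun (congrArg (fun z => z.1) x.2) i
          rw [this, sub_self]
        have hex : ∀ i, ∃ w, x.1.1 i - x0 i = (p : ZMod (p^(j+1)))^j * w :=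
          fun i => ker_pi_exists p j _ (hxi i)
        choose z hz using hex
        set t : Fin m → ZMod p := fun i => (((z i).val : ℕ) : ZMod p) with htdef
        have hxeq : ∀ i, x0 i + psi p j (t i) = x.1.1 i := by
          intro i
          rw [htdef, ← pj_mul_eq_psi, ← hz i]
          ring
        have ht : ∑ i, b i * t i = d := by
          apply (cond_key t).mp
          rw [Finset.sum_congr rfl fun i _ => by rw [hxeq i]]
          exact x.1.2
        refine ⟨⟨t, ht⟩, ?_⟩
        refine Subtype.ext (Subtype.ext (funext fun i => ?_))
        exact hxeq i
      exact Fintype.card_congr (Equiv.ofBijective G ⟨hGinj, hGsurj⟩).symm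
    rw [hfibequiv, card_linear p m b i0 hbi0 d]
  rw [hcard, Finset.sum_congr rfl fun y _ => hfib y, Finset.sum_const, Finset.card_univ,
    smul_eq_mul, mul_comm]

end LiftMain

/-- Number of solutions of the diagonal quadratic congruence
`a₁x₁² + ⋯ + aₘxₘ² ≡ k (mod p^j)`. -/
noncomputable def densCount (p m : ℕ) (a : Fin m → ℤ) (k : ℤ) (j : ℕ) : ℕ :=
  Nat.card {x : Fin m → ZMod (p ^ j) //
    ∑ i, (a i : ZMod (p ^ j)) * (x i) ^ 2 = (k : ZMod (p ^ j))}

/-- The `p`-local density of a diagonal quadratic form in an even number `m` of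
variables, for an odd prime `p` with `p ∤ 2·det Q` and `p ∤ k`:
`δ_p(Q,k) = 1 - ((-1)^{m/2} det(Q) | p) p^{-m/2}`. -/
theorem stmt2 (p m : ℕ) [Fact p.Prime] (hp2 : p ≠ 2) (hm0 : 0 < m) (hm : Even m)
    (a : Fin m → ℤ) (ha : ∀ i, a i ≠ 0)
    (hdet : ¬ (p : ℤ) ∣ 2 * ∏ i, a i)
    (k : ℤ) (hk : ¬ (p : ℤ) ∣ k) :
    Tendsto (fun j => (densCount p m a k j : ℝ) / (p : ℝ) ^ (j * (m - 1)))
      atTop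
      (𝓝 (1 - (legendreSym p ((-1) ^ (m / 2) * ∏ i, a i) : ℝ) *
        (p : ℝ) ^ (-(m : ℝ) / 2))) := by
  have hpp : p.Prime := Fact.out
  have hai : ∀ i, ¬ (p:ℤ) ∣ a i := by
    intro i h
    exact hdet (Dvd.dvd.mul_left (h.trans (Finset.dvd_prod_of_mem a (Finset.mem_univ i))) 2)
  have hane : ∀ i, ((a i : ZMod p)) ≠ 0 := by
    intro i h
    exact hai i ((ZMod.intCast_zmod_eq_zero_iff_dvd _ _).mp h)
  have hkne : ((k : ZMod p)) ≠ 0 := by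
    intro h
    exact hk ((ZMod.intCast_zmod_eq_zero_iff_dvd _ _).mp h)
  set N1 : ℕ := Fintype.card {x : Fin m → ZMod p //
      ∑ i, (a i : ZMod p) * x i ^ 2 = (k : ZMod p)} with hN1def
  set ε : ℤ := legendreSym p ((-1) ^ (m / 2) * ∏ i, a i) with hεdef
  have hεχ : ε = quadraticChar (ZMod p) ((-1) ^ (m / 2) * ∏ i, (a i : ZMod p)) := by
    rw [hεdef, legendreSym]
    congr 1
    push_cast
    rfl
  have hN1 : (N1 : ℤ) = (p:ℤ) ^ (m - 1) - ε * (p:ℤ) ^ (m / 2 - 1) := by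
    rw [hN1def, countA p hp2 m hm0 (fun i => (a i : ZMod p)) hane (k : ZMod p),
      if_pos hm, if_neg hkne, hεχ]
    ring
  -- relation between densCount and N1
  have hd1 : densCount p m a k 1 = N1 := by
    unfold densCount
    rw [Nat.card_eq_fintype_card]
    set e := ZMod.ringEquivCongr (pow_one p) with hedef
    refine Fintype.card_congr ⟨fun x => ⟨fun i => e (x.1 i), ?_⟩, fun x => ⟨fun i => e.symm (x.1 i), ?_⟩, fun x => ?_, fun x => ?_⟩
    · have := congrArg e x.2
      rw [map_sum, map_intCast] at this
      rw [← this]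
      exact Finset.sum_congr rfl fun i _ => by rw [map_mul, map_pow, map_intCast]
    · have := congrArg e.symm x.2
      rw [map_sum, map_intCast] at this
      rw [← this]
      exact Finset.sum_congr rfl fun i _ => by rw [map_mul, map_pow, map_intCast]
    · ext1; funext i; simp
    · ext1; funext i; simp
  have hstep : ∀ j, 1 ≤ j → densCount p m a k (j+1) = p^(m-1) * densCount p m a k j := by
    intro j hj
    unfold densCount
    rw [Nat.card_eq_fintype_card, Nat.card_eq_fintype_card]
    exact lift_card p hp2 m a hai k hk j hj
  have hppos : (0:ℝ) < (p:ℝ) := by exact_mod_cast hpp.pos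
  have hpne : (p:ℝ) ≠ 0 := ne_of_gt hppos
  have hconst : ∀ j, 1 ≤ j →
      (densCount p m a k j : ℝ) / (p : ℝ) ^ (j * (m - 1)) = (N1 : ℝ) / (p:ℝ) ^ (m - 1) := by
    intro j hj
    induction j, hj using Nat.le_induction with
    | base => rw [hd1, one_mul]
    | succ j hj ih =>
      rw [hstep j hj]
      push_cast
      rw [show (j+1) * (m-1) = j * (m-1) + (m-1) by ring, pow_add]
      rw [show ((p:ℝ)^(m-1) * (densCount p m a k j : ℝ)) / ((p:ℝ) ^ (j * (m-1)) * (p:ℝ)^(m-1))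
          = (densCount p m a k j : ℝ) / (p:ℝ) ^ (j * (m-1)) by
        field_simp]
      exact ih
  -- the limit value
  have hval : (N1 : ℝ) / (p:ℝ) ^ (m - 1) = 1 - (ε : ℝ) * (p : ℝ) ^ (-(m : ℝ) / 2) := by
    clear_value N1 ε
    obtain ⟨t, ht⟩ := hm
    have harith1 : m - 1 = (m / 2 - 1) + m / 2 := by clear * - ht hm0; omega
    have harith2 : m = 2 * (m / 2) := by clear * - ht; omega
    have hsplit : (p:ℝ) ^ (m - 1) = (p:ℝ) ^ (m / 2 - 1) * (p:ℝ) ^ (m / 2) := by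
      rw [← pow_add]
      congr 1
    have hrpow : (p : ℝ) ^ (-(m : ℝ) / 2) = ((p:ℝ) ^ (m / 2 : ℕ))⁻¹ := by
      have hmr : -(m : ℝ) / 2 = -((m / 2 : ℕ) : ℝ) := by
        have h2 : (m : ℝ) = 2 * ((m / 2 : ℕ) : ℝ) := by
          exact_mod_cast congrArg (Nat.cast : ℕ → ℝ) harith2
        rw [h2]
        ring
      rw [hmr, Real.rpow_neg (le_of_lt hppos), Real.rpow_natCast]
    have hcast : (N1 : ℝ) = (p:ℝ) ^ (m - 1) - (ε:ℝ) * (p:ℝ) ^ (m / 2 - 1) := by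
      exact_mod_cast congrArg (fun z : ℤ => (z : ℝ)) hN1
    rw [hcast, hrpow, hsplit]
    have h1 : (p:ℝ) ^ (m / 2 - 1) ≠ 0 := pow_ne_zero _ hpne
    have h2 : (p:ℝ) ^ (m / 2) ≠ 0 := pow_ne_zero _ hpne
    field_simp
  have hfinal : Tendsto (fun j => (densCount p m a k j : ℝ) / (p : ℝ) ^ (j * (m - 1)))
      atTop (𝓝 ((N1 : ℝ) / (p:ℝ) ^ (m - 1))) :=
    Tendsto.congr' (eventually_atTop.mpr ⟨1, fun j hj => (hconst j hj).symm⟩) tendsto_const_nhds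
  rw [hval] at hfinal
  exact hfinal
end

section
/- Let Q be a Hermitian matrix over F ∈ {ℝ, ℂ} of signature (n,1) and let x, y ∈ F^{n+1} satisfy Q[x] < 0 and Q[y] < 0. Then |Q(x,y)|² ≥ Q[x]·Q[y], i.e. |Q(x,y)| / (|Q[x]|^{1/2}·|Q[y]|^{1/2}) ≥ 1; in particular cosh(d([x],[y])) := |Q(x,y)|/(|Q[x]|^{1/2}|Q[y]|^{1/2}) is well-defined as the hyperbolic cosine of a distance. -/
open Matrix

private lemma key_ineq (p q c d t s : ℝ) (hp : 0 ≤ p) (hq : 0 ≤ q)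
    (hc : 0 ≤ c) (hd : 0 ≤ d)
    (h1 : t ≤ p * q) (h2 : p ^ 2 < c ^ 2) (h3 : q ^ 2 < d ^ 2)
    (h4 : c * d - t ≤ s) :
    (p ^ 2 - c ^ 2) * (q ^ 2 - d ^ 2) ≤ s ^ 2 := by
  have hpc : p < c := by nlinarith
  have hqd : q < d := by nlinarith
  have hpq : p * q ≤ c * d := by nlinarith
  have h5 : 0 ≤ c * d - t := by linarith
  have h6 : (c * d - t) ^ 2 ≤ s ^ 2 := by nlinarith
  have h7 : (c * d - p * q) ^ 2 ≤ (c * d - t) ^ 2 := by nlinarith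
  nlinarith [sq_nonneg (p * d - q * c)]

/-- Reverse Cauchy–Schwarz on the negative cone of a Hermitian form of signature
`(n,1)` over `F = ℝ` or `ℂ`: if `Q[x] < 0` and `Q[y] < 0` then
`|Q(x,y)|² ≥ Q[x]·Q[y]`, so `cosh d([x],[y]) = |Q(x,y)|/(|Q[x]|^{1/2}|Q[y]|^{1/2}) ≥ 1`
is well-defined. -/
theorem stmt11 (𝕜 : Type*) [RCLike 𝕜] (n : ℕ)
    (Q : Matrix (Fin (n + 1)) (Fin (n + 1)) 𝕜) (hQ : Qᴴ = Q)
    (hsig : ∃ g : GL (Fin (n + 1)) 𝕜,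
      (g : Matrix (Fin (n + 1)) (Fin (n + 1)) 𝕜)ᴴ * Q * g =
        Matrix.diagonal (fun i => if i = Fin.last n then (-1 : 𝕜) else 1))
    (x y : Fin (n + 1) → 𝕜)
    (hx : RCLike.re (star x ⬝ᵥ Q.mulVec x) < 0)
    (hy : RCLike.re (star y ⬝ᵥ Q.mulVec y) < 0) :
    RCLike.re (star x ⬝ᵥ Q.mulVec x) * RCLike.re (star y ⬝ᵥ Q.mulVec y) ≤
      ‖star x ⬝ᵥ Q.mulVec y‖ ^ 2 ∧
    1 ≤ ‖star x ⬝ᵥ Q.mulVec y‖ /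
      (Real.sqrt |RCLike.re (star x ⬝ᵥ Q.mulVec x)| *
        Real.sqrt |RCLike.re (star y ⬝ᵥ Q.mulVec y)|) := by
  obtain ⟨g, hg⟩ := hsig
  set D : Matrix (Fin (n+1)) (Fin (n+1)) 𝕜 :=
    Matrix.diagonal (fun i => if i = Fin.last n then (-1 : 𝕜) else 1) with hD
  set B : Matrix (Fin (n+1)) (Fin (n+1)) 𝕜 := ↑g⁻¹ with hB
  have h1 : (↑g : Matrix (Fin (n+1)) (Fin (n+1)) 𝕜) * B = 1 := by
    rw [hB]; exact_mod_cast g.mul_inv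
  have hQeq : Q = Bᴴ * D * B := by
    calc Q = ((↑g : Matrix (Fin (n+1)) (Fin (n+1)) 𝕜) * B)ᴴ * Q *
          ((↑g : Matrix (Fin (n+1)) (Fin (n+1)) 𝕜) * B) := by rw [h1]; simp
      _ = Bᴴ * (((↑g) : Matrix (Fin (n+1)) (Fin (n+1)) 𝕜)ᴴ * Q * ↑g) * B := by
          simp only [conjTranspose_mul]; noncomm_ring
      _ = Bᴴ * D * B := by rw [hg]
  have hform : ∀ z w, star z ⬝ᵥ Q *ᵥ w = star (B *ᵥ z) ⬝ᵥ (D *ᵥ (B *ᵥ w)) := by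
    intro z w
    rw [hQeq, ← mulVec_mulVec, ← mulVec_mulVec, dotProduct_mulVec, ← star_mulVec]
  set u : Fin (n+1) → 𝕜 := B *ᵥ x with hu
  set v : Fin (n+1) → 𝕜 := B *ᵥ y with hv
  set a : EuclideanSpace 𝕜 (Fin n) := WithLp.toLp 2 (fun i : Fin n => u i.castSucc) with ha
  set b : EuclideanSpace 𝕜 (Fin n) := WithLp.toLp 2 (fun i : Fin n => v i.castSucc) with hb
  have hDform : ∀ (z w : Fin (n+1) → 𝕜), star z ⬝ᵥ (D *ᵥ w) =
      (∑ i : Fin n, (starRingEnd 𝕜) (z i.castSucc) * w i.castSucc)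
        - (starRingEnd 𝕜) (z (Fin.last n)) * w (Fin.last n) := by
    intro z w
    simp only [dotProduct, Pi.star_apply, hD, mulVec_diagonal, RCLike.star_def]
    rw [Fin.sum_univ_castSucc]
    simp [Fin.ne_of_lt (Fin.castSucc_lt_last _)]
    ring
  -- rewrite the three quadratic form quantities
  have hxx : star x ⬝ᵥ Q *ᵥ x =
      (inner 𝕜 a a) - (starRingEnd 𝕜) (u (Fin.last n)) * u (Fin.last n) := by
    rw [hform, ← hu, hDform, PiLp.inner_apply]; congr 1; exact Finset.sum_congr rfl fun i _ => by simp [ha, hb, mul_comm, RCLike.mul_conj]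
  have hyy : star y ⬝ᵥ Q *ᵥ y =
      (inner 𝕜 b b) - (starRingEnd 𝕜) (v (Fin.last n)) * v (Fin.last n) := by
    rw [hform, ← hv, hDform, PiLp.inner_apply]; congr 1; exact Finset.sum_congr rfl fun i _ => by simp [ha, hb, mul_comm, RCLike.mul_conj]
  have hxy : star x ⬝ᵥ Q *ᵥ y =
      (inner 𝕜 a b) - (starRingEnd 𝕜) (u (Fin.last n)) * v (Fin.last n) := by
    rw [hform, ← hu, ← hv, hDform, PiLp.inner_apply]; congr 1; exact Finset.sum_congr rfl fun i _ => by simp [ha, hb, mul_comm]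
  have hrex : RCLike.re (star x ⬝ᵥ Q *ᵥ x) = ‖a‖ ^ 2 - ‖u (Fin.last n)‖ ^ 2 := by
    rw [hxx, map_sub, inner_self_eq_norm_sq, RCLike.conj_mul, ← RCLike.ofReal_pow,
      RCLike.ofReal_re]
  have hrey : RCLike.re (star y ⬝ᵥ Q *ᵥ y) = ‖b‖ ^ 2 - ‖v (Fin.last n)‖ ^ 2 := by
    rw [hyy, map_sub, inner_self_eq_norm_sq, RCLike.conj_mul, ← RCLike.ofReal_pow,
      RCLike.ofReal_re]
  have hT : ‖(inner 𝕜 a b)‖ ≤ ‖a‖ * ‖b‖ := norm_inner_le_norm a b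
  have hS : ‖u (Fin.last n)‖ * ‖v (Fin.last n)‖ - ‖(inner 𝕜 a b)‖ ≤
      ‖star x ⬝ᵥ Q *ᵥ y‖ := by
    rw [hxy]
    calc ‖u (Fin.last n)‖ * ‖v (Fin.last n)‖ - ‖(inner 𝕜 a b)‖
        = ‖(starRingEnd 𝕜) (u (Fin.last n)) * v (Fin.last n)‖ - ‖(inner 𝕜 a b)‖ := by
          rw [norm_mul, RCLike.norm_conj]
      _ ≤ ‖(starRingEnd 𝕜) (u (Fin.last n)) * v (Fin.last n) - (inner 𝕜 a b)‖ :=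
          norm_sub_norm_le _ _
      _ = ‖(inner 𝕜 a b) - (starRingEnd 𝕜) (u (Fin.last n)) * v (Fin.last n)‖ :=
          (norm_sub_rev _ _)
  have hx' : ‖a‖ ^ 2 < ‖u (Fin.last n)‖ ^ 2 := by rw [hrex] at hx; linarith
  have hy' : ‖b‖ ^ 2 < ‖v (Fin.last n)‖ ^ 2 := by rw [hrey] at hy; linarith
  have main : RCLike.re (star x ⬝ᵥ Q.mulVec x) * RCLike.re (star y ⬝ᵥ Q.mulVec y) ≤
      ‖star x ⬝ᵥ Q.mulVec y‖ ^ 2 := by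
    rw [hrex, hrey]
    exact key_ineq ‖a‖ ‖b‖ ‖u (Fin.last n)‖ ‖v (Fin.last n)‖ ‖(inner 𝕜 a b)‖ _
      (norm_nonneg _) (norm_nonneg _) (norm_nonneg _) (norm_nonneg _) hT hx' hy' hS
  refine ⟨main, ?_⟩
  set P := RCLike.re (star x ⬝ᵥ Q.mulVec x)
  set R := RCLike.re (star y ⬝ᵥ Q.mulVec y)
  have hPR : |P| * |R| = P * R := by
    rw [abs_of_neg hx, abs_of_neg hy]; ring
  have hden : 0 < Real.sqrt |P| * Real.sqrt |R| := by
    apply mul_pos <;> exact Real.sqrt_pos.2 (abs_pos.2 (by linarith [hx, hy] ; )) 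
  rw [le_div_iff₀ hden, one_mul, ← Real.sqrt_mul (abs_nonneg _), hPR]
  calc Real.sqrt (P * R) ≤ Real.sqrt (‖star x ⬝ᵥ Q.mulVec y‖ ^ 2) := Real.sqrt_le_sqrt main
    _ = ‖star x ⬝ᵥ Q.mulVec y‖ := Real.sqrt_sq (norm_nonneg _)
end
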